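/- There exists a constant C₁ > 0, independent of ε, such that for every ε > 0 and every x ∈ ℝ one has −C₁ · ε · √(a_ε(x)) ≤ a_ε'(x) ≤ 0. -/

import Mathlib

/-- The smooth bump ingredient: `f x = exp (-1/x)` for `x > 0`, and `0` for `x ≤ 0`. -/
noncomputable def paperF (x : ℝ) : ℝ := if 0 < x then Real.exp (-1 / x) else 0

/-- The smooth transition function `ψ x = f x / (f x + f (1 - x))`. -/
noncomputable def paperPsi (x : ℝ) : ℝ := paperF x / (paperF x + paperF (1 - x))

/-- The cutoff function `a_ε x = ψ(2 - ε x)²`. -/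
noncomputable def paperA (ε x : ℝ) : ℝ := (paperPsi (2 - ε * x)) ^ 2


lemma paperF_eq : paperF = expNegInvGlue := by
  funext x
  simp only [paperF, expNegInvGlue, neg_div, one_div]
  rcases lt_or_ge 0 x with h | h
  · rw [if_pos h, if_neg (not_le.2 h)]
  · rw [if_neg (not_lt.2 h), if_pos h]

lemma paperPsi_eq : paperPsi = Real.smoothTransition := by
  funext x; simp [paperPsi, Real.smoothTransition, paperF_eq]

lemma glue_mono : Monotone expNegInvGlue := by
  intro x y hxy
  rcases le_or_gt x 0 with h | h
  · rw [expNegInvGlue.zero_of_nonpos h]; exact expNegInvGlue.nonneg y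
  · have hy : 0 < y := h.trans_le hxy
    simp only [expNegInvGlue, if_neg (not_le.2 h), if_neg (not_le.2 hy)]
    exact Real.exp_le_exp.2 (neg_le_neg (inv_anti₀ h hxy))

lemma psi_mono : Monotone Real.smoothTransition := by
  intro x y hxy
  unfold Real.smoothTransition
  rw [div_le_div_iff₀ (Real.smoothTransition.pos_denom x) (Real.smoothTransition.pos_denom y)]
  have h1 : expNegInvGlue x * expNegInvGlue (1 - y) ≤
      expNegInvGlue y * expNegInvGlue (1 - x) :=
    mul_le_mul (glue_mono hxy) (glue_mono (by linarith)) (expNegInvGlue.nonneg _)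
      (expNegInvGlue.nonneg _)
  nlinarith [expNegInvGlue.nonneg x, expNegInvGlue.nonneg y]

lemma psi_diff : Differentiable ℝ Real.smoothTransition :=
  (Real.smoothTransition.contDiff (n := 1)).differentiable one_ne_zero

lemma psi_deriv_nonneg (u : ℝ) : 0 ≤ deriv Real.smoothTransition u := by
  have h := (psi_diff u).hasDerivAt
  rw [hasDerivAt_iff_tendsto_slope] at h
  refine ge_of_tendsto h (Filter.Eventually.of_forall fun y => ?_)
  rw [slope_def_field]
  rcases lt_or_ge u y with hy | hy
  · exact div_nonneg (sub_nonneg.2 (psi_mono hy.le)) (sub_nonneg.2 hy.le)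
  · exact div_nonneg_iff.2 (Or.inr ⟨sub_nonpos.2 (psi_mono hy), by linarith⟩)

lemma psi_deriv_zero_of_lt {u : ℝ} (h : u < 0) : deriv Real.smoothTransition u = 0 := by
  have : Real.smoothTransition =ᶠ[nhds u] fun _ => (0 : ℝ) := by
    filter_upwards [gt_mem_nhds h] with y hy
    exact Real.smoothTransition.zero_of_nonpos hy.le
  rw [this.deriv_eq, deriv_const]

lemma psi_deriv_zero_of_gt {u : ℝ} (h : 1 < u) : deriv Real.smoothTransition u = 0 := by
  have : Real.smoothTransition =ᶠ[nhds u] fun _ => (1 : ℝ) := by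
    filter_upwards [lt_mem_nhds h] with y hy
    exact Real.smoothTransition.one_of_one_le hy.le
  rw [this.deriv_eq, deriv_const]

lemma psi_deriv_bounded : ∃ M : ℝ, ∀ u : ℝ, deriv Real.smoothTransition u ≤ M := by
  have hc : Continuous (deriv Real.smoothTransition) :=
    (Real.smoothTransition.contDiff (n := 2)).continuous_deriv (by norm_num)
  obtain ⟨p, -, hm⟩ := isCompact_Icc.exists_isMaxOn (Set.nonempty_Icc.2 zero_le_one)
    (hc.continuousOn (s := Set.Icc (0:ℝ) 1))
  set m := deriv Real.smoothTransition p with hmdef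
  refine ⟨max m 0, fun u => ?_⟩
  rcases lt_or_ge u 0 with h | h
  · rw [psi_deriv_zero_of_lt h]; exact le_max_right _ _
  rcases le_or_gt u 1 with h1 | h1
  · exact le_trans (hm ⟨h, h1⟩) (le_max_left _ _)
  · rw [psi_deriv_zero_of_gt h1]; exact le_max_right _ _


/-- there is a constant `C₁ > 0`, independent of `ε`, such that for all
`ε > 0` and all `x`, `-C₁ · ε · √(a_ε x) ≤ a_ε'(x) ≤ 0`. -/
theorem cutoff_deriv_bound :
    ∃ C₁ : ℝ, 0 < C₁ ∧ ∀ ε : ℝ, 0 < ε → ∀ x : ℝ,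
      -C₁ * ε * Real.sqrt (paperA ε x) ≤ deriv (paperA ε) x ∧
      deriv (paperA ε) x ≤ 0 := by
  obtain ⟨M, hM⟩ := psi_deriv_bounded
  have hM0 : 0 ≤ M := le_trans (psi_deriv_nonneg 0) (hM 0)
  refine ⟨2 * M + 1, by linarith, fun ε hε x => ?_⟩
  set g := Real.smoothTransition
  set u := 2 - ε * x with hu
  have haff : HasDerivAt (fun x : ℝ => 2 - ε * x) (-(ε * 1)) x :=
    ((hasDerivAt_id x).const_mul ε).const_sub 2
  have hgu : HasDerivAt g (deriv g u) u := (psi_diff u).hasDerivAt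
  have hcomp : HasDerivAt (fun x : ℝ => g (2 - ε * x)) (deriv g u * -(ε * 1)) x :=
    by
      have h2 : HasDerivAt g (deriv g u) ((fun x : ℝ => 2 - ε * x) x) := hgu
      exact h2.comp x haff
  have hAeq : paperA ε = fun y : ℝ => g (2 - ε * y) ^ 2 := by
    funext y; simp [paperA, paperPsi_eq]; rfl
  have hA : HasDerivAt (paperA ε) (2 * g u ^ 1 * (deriv g u * -(ε * 1))) x := by
    rw [hAeq]; exact hcomp.pow 2
  have hderiv : deriv (paperA ε) x = -(2 * ε * g u * deriv g u) := by
    rw [hA.deriv]; ring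
  have hgnn : 0 ≤ g u := Real.smoothTransition.nonneg u
  have hdnn : 0 ≤ deriv g u := psi_deriv_nonneg u
  have hsqrt : Real.sqrt (paperA ε x) = g u := by
    rw [paperA, paperPsi_eq, Real.sqrt_sq hgnn]
  constructor
  · rw [hderiv, hsqrt]
    have h1 := hM u
    nlinarith [mul_nonneg (mul_nonneg hε.le hgnn) (sub_nonneg.2 h1),
      mul_nonneg hε.le hgnn]
  · rw [hderiv]
    have : 0 ≤ 2 * ε * g u * deriv g u := by positivity
    linarith
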